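/- 7ζ(3)/(4π) < G < 7ζ(3)/(2π), where G is Catalan's constant and ζ(3) is Apéry's constant. -/

import Mathlib

open Filter Finset Topology

noncomputable def catF : ℕ → ℝ := fun k => 1 / (1 + 2 * (k : ℝ)) ^ 2

lemma catF_antitone : Antitone catF := by
  intro m n hmn
  have : (m:ℝ) ≤ (n:ℝ) := by exact_mod_cast hmn
  unfold catF
  gcongr

lemma catF_summable : Summable catF := by
  apply Summable.of_nonneg_of_le (fun k => by unfold catF; positivity)
    (fun k => ?_) (Real.summable_one_div_nat_pow.2 one_lt_two |>.comp_injective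
      (add_right_injective 1))
  unfold catF
  show _ ≤ 1 / ((1 + k : ℕ) : ℝ) ^ 2
  have : (0:ℝ) ≤ (k:ℝ) := Nat.cast_nonneg k
  rw [div_le_div_iff₀ (by positivity) (by positivity)]
  push_cast
  nlinarith

lemma catG_summable : Summable (fun k : ℕ => (-1 : ℝ) ^ k / (1 + 2 * (k : ℝ)) ^ 2) := by
  apply Summable.of_abs
  have : (fun k : ℕ => |(-1 : ℝ) ^ k / (1 + 2 * (k : ℝ)) ^ 2|) = catF := by
    funext k
    rw [abs_div, abs_pow, abs_neg, abs_one, one_pow]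
    unfold catF
    congr 1
    rw [abs_of_nonneg (by positivity)]
  rw [this]
  exact catF_summable

lemma catG_tendsto : Tendsto (fun n ↦ ∑ i ∈ range n, (-1:ℝ) ^ i * catF i) atTop
    (nhds (∑' k : ℕ, (-1 : ℝ) ^ k / (1 + 2 * (k : ℝ)) ^ 2)) := by
  have h := catG_summable.hasSum.tendsto_sum_nat
  convert h using 2 with n
  apply Finset.sum_congr rfl
  intro i _
  unfold catF
  ring

lemma catG_lower : (8:ℝ)/9 ≤ ∑' k : ℕ, (-1 : ℝ) ^ k / (1 + 2 * (k : ℝ)) ^ 2 := by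
  have h := catF_antitone.alternating_series_le_tendsto catG_tendsto 1
  simp only [Finset.sum_range_succ, Finset.sum_range_zero, catF] at h
  norm_num at h
  linarith

lemma catG_upper : (∑' k : ℕ, (-1 : ℝ) ^ k / (1 + 2 * (k : ℝ)) ^ 2) ≤ 1 := by
  have h := catF_antitone.tendsto_le_alternating_series catG_tendsto 0
  simp only [Finset.sum_range_succ, Finset.sum_range_zero, catF] at h
  norm_num at h
  linarith

lemma zeta3_summable : Summable (fun k : ℕ => 1 / ((k : ℝ) + 1) ^ 3) := by
  exact (Real.summable_one_div_nat_pow.2 (by norm_num : 1 < 3) |>.comp_injective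
      (add_right_injective 1)).congr
    (fun k => by show (1:ℝ) / ((1 + k : ℕ):ℝ) ^ 3 = _; push_cast; ring_nf)

lemma zeta3_lower : (1:ℝ) ≤ ∑' k : ℕ, 1 / ((k : ℝ) + 1) ^ 3 := by
  have h := Summable.le_tsum zeta3_summable 0 (fun k _ => by positivity)
  have h0 : (1:ℝ) / (((0:ℕ):ℝ) + 1) ^ 3 = 1 := by norm_num
  linarith

lemma basel_shift : HasSum (fun k : ℕ => 1 / ((k : ℝ) + 1) ^ 2) (Real.pi ^ 2 / 6) := by
  have h := hasSum_zeta_two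
  rw [← hasSum_nat_add_iff' 1] at h
  simpa using h

lemma zeta3_upper : (∑' k : ℕ, 1 / ((k : ℝ) + 1) ^ 3) ≤ 1/2 + Real.pi ^ 2 / 12 := by
  have hb : HasSum (fun k : ℕ => (1/2) * (1 / ((k : ℝ) + 1) ^ 2) + (if k = 0 then (1:ℝ)/2 else 0))
      (1/2 + Real.pi ^ 2 / 12) := by
    have h1 := basel_shift.mul_left (1/2 : ℝ)
    have h2 : HasSum (fun k : ℕ => (if k = 0 then (1:ℝ)/2 else 0)) (1/2) := hasSum_ite_eq 0 (1/2)
    have := h1.add h2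
    convert this using 1
    exacts [rfl, by ring]
  rw [← hb.tsum_eq]
  apply Summable.tsum_le_tsum _ zeta3_summable hb.summable
  intro k
  rcases Nat.eq_zero_or_pos k with hk | hk
  · subst hk; norm_num
  · have hk1 : (1:ℝ) ≤ (k:ℝ) := by exact_mod_cast hk
    rw [if_neg hk.ne', add_zero, mul_one_div,
      div_le_div_iff₀ (by positivity) (by positivity)]
    nlinarith

theorem catalan_bounds :
    7 * (∑' k : ℕ, 1 / ((k : ℝ) + 1) ^ 3) / (4 * Real.pi)
        < (∑' k : ℕ, (-1 : ℝ) ^ k / (1 + 2 * (k : ℝ)) ^ 2) ∧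
      (∑' k : ℕ, (-1 : ℝ) ^ k / (1 + 2 * (k : ℝ)) ^ 2)
        < 7 * (∑' k : ℕ, 1 / ((k : ℝ) + 1) ^ 3) / (2 * Real.pi) := by
  have hpil := Real.pi_gt_d6
  have hpiu := Real.pi_lt_d2
  have hZl := zeta3_lower
  have hZu := zeta3_upper
  have hGl := catG_lower
  have hGu := catG_upper
  have hpip := Real.pi_pos
  have hpi2 : Real.pi ^ 2 < 3.15 ^ 2 := by nlinarith
  constructor
  · calc 7 * (∑' k : ℕ, 1 / ((k : ℝ) + 1) ^ 3) / (4 * Real.pi)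
        ≤ 7 * (1/2 + 3.15^2/12) / (4 * 3.141592) := by
          apply div_le_div₀ (by norm_num) (by nlinarith) (by norm_num) (by nlinarith)
      _ < 8/9 := by norm_num
      _ ≤ _ := hGl
  · calc (∑' k : ℕ, (-1 : ℝ) ^ k / (1 + 2 * (k : ℝ)) ^ 2) ≤ 1 := hGu
      _ < 7 * 1 / (2 * 3.15) := by norm_num
      _ ≤ 7 * (∑' k : ℕ, 1 / ((k : ℝ) + 1) ^ 3) / (2 * Real.pi) := by
          apply div_le_div₀ (by positivity) (by nlinarith) (by linarith) (by nlinarith)
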